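/- Let (M, π, g*) be a Poisson manifold with cometric g* and Levi-Civita contravariant connection D. If Dπ = 0 (i.e. π_#(α)·π(β,γ) = π(D_α β, γ) + π(β, D_α γ) for all 1-forms α, β, γ), then for all 1-forms α, β and all smooth functions f: π(D_α df, β) + π(α, D_β df) = −(L_{π_#(df)} π)(α, β), where L denotes the Lie derivative along the Hamiltonian vector field π_#(df). -/
import Mathlib


/-- Let `(M, π, g*)` be a Poisson manifold with cometric `g*` and Levi-Civita
contravariant connection `D`. We record the relevant structure algebraically: `F` is the space
of smooth functions, `Ω` the space of 1-forms, `π : Ω → Ω → F` the Poisson bivector (skew,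
additive in each argument), `ρ α = π_#(α)·` the anchor acting on functions, `d : F → Ω` the
differential, `koszul` the Koszul bracket `[·,·]_π`, and `Lπ f α β = (L_{π_#(df)} π)(α, β)`
the Lie derivative of `π` along the Hamiltonian vector field `π_#(df)`.
Hypotheses: `D` is torsion-free (`D_α β - D_β α = [α,β]_π`), `Dπ = 0`
(`π_#(α)·π(β,γ) = π(D_α β, γ) + π(β, D_α γ)`), and the evaluation identity
`[α,β]_π(π_#(df)) = π_#(α)·β(π_#(df)) - π_#(β)·α(π_#(df)) + (L_{π_#(df)}π)(α,β)`,
where `γ(π_#(df)) = π(df, γ)`.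
Conclusion: `π(D_α df, β) + π(α, D_β df) = -(L_{π_#(df)} π)(α, β)`. -/
theorem Dpi_zero_implies_lie_derivative_formula
    {F Ω : Type*} [AddCommGroup F] [AddCommGroup Ω]
    (π : Ω → Ω → F) (ρ : Ω → F → F) (d : F → Ω) (D : Ω → Ω → Ω)
    (koszul : Ω → Ω → Ω) (Lπ : F → Ω → Ω → F)
    (hπskew : ∀ α β, π α β = - π β α)
    (hπsub : ∀ γ α β, π γ (α - β) = π γ α - π γ β)
    (htorsionfree : ∀ α β, D α β - D β α = koszul α β)
    (hDπ : ∀ α β γ, ρ α (π β γ) = π (D α β) γ + π β (D α γ))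
    (hEval : ∀ (f : F) (α β : Ω),
      π (d f) (koszul α β) = ρ α (π (d f) β) - ρ β (π (d f) α) + Lπ f α β) :
    ∀ (f : F) (α β : Ω), π (D α (d f)) β + π α (D β (d f)) = - Lπ f α β := by
  intro f α β
  have h3 := hEval f α β
  rw [← htorsionfree, hπsub, hDπ α (d f) β, hDπ β (d f) α] at h3
  rw [hπskew α (D β (d f))]
  linear_combination (norm := abel) -h3
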